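/- Aggregate rate-limit soundness: if the rate-limit check admits an operation of amount a at time t only when the sum of amounts of all previously admitted operations within the window (t - W, t] plus a does not exceed the limit L, then for every time t, the total amount of admitted operations within any window of length W ending at t is at most L. -/
import Mathlib


/-- Sum of the amounts of admitted operations whose time lies in the window (t - W, t]. -/
noncomputable def windowedSum (S : List (ℝ × ℝ)) (t W : ℝ) : ℝ :=
  ((S.filter (fun p => decide (t - W < p.2 ∧ p.2 ≤ t))).map Prod.fst).sum

/-- The admission policy: operations (amount, time) with nonnegative amounts are
admitted sequentially at strictly increasing times, and (a, t) is admitted only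
if the windowed sum at time t plus a does not exceed the limit L. -/
inductive Admitted (W L : ℝ) : List (ℝ × ℝ) → Prop
  | nil : Admitted W L []
  | snoc (S : List (ℝ × ℝ)) (a t : ℝ) :
      Admitted W L S → 0 ≤ a → (∀ p ∈ S, p.2 < t) →
      windowedSum S t W + a ≤ L → Admitted W L (S ++ [(a, t)])

lemma amounts_nonneg (W L : ℝ) (S : List (ℝ × ℝ)) (hS : Admitted W L S) :
    ∀ p ∈ S, 0 ≤ p.1 := by
  induction hS with
  | nil => simp
  | snoc S a t _ ha _ _ ih =>
      intro p hp
      rcases List.mem_append.1 hp with h | h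
      · exact ih p h
      · simp at h; simp [h, ha]

lemma filter_sum_mono (S : List (ℝ × ℝ)) (p q : ℝ × ℝ → Bool)
    (hpq : ∀ x ∈ S, p x = true → q x = true) (hnn : ∀ x ∈ S, 0 ≤ x.1) :
    ((S.filter p).map Prod.fst).sum ≤ ((S.filter q).map Prod.fst).sum := by
  induction S with
  | nil => simp
  | cons x xs ih =>
      have hx : 0 ≤ x.1 := hnn x (by simp)
      have ih' := ih (fun y hy => hpq y (by simp [hy])) (fun y hy => hnn y (by simp [hy]))
      by_cases hp : p x = true
      · have hq := hpq x (by simp) hp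
        simp [List.filter_cons, hp, hq]
        linarith
      · by_cases hq : q x = true
        · simp [List.filter_cons, hp, hq]
          linarith
        · simp [List.filter_cons, hp, hq]
          exact ih'

/-- Aggregate rate-limit soundness: for every time t, the total admitted amount
within any window of length W ending at t is at most L. -/
theorem stmt_7 (W L : ℝ) (hW : 0 < W) (hL : 0 ≤ L)
    (S : List (ℝ × ℝ)) (hS : Admitted W L S) :
    ∀ t : ℝ, windowedSum S t W ≤ L := by
  induction hS with
  | nil => intro t; simp [windowedSum, hL]
  | snoc S a s hAdm ha hlt hcheck ih =>
      intro t
      have hnn := amounts_nonneg W L S hAdm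
      unfold windowedSum
      rw [List.filter_append, List.map_append, List.sum_append]
      by_cases hin : t - W < s ∧ s ≤ t
      · have hfil : [((a, s) : ℝ × ℝ)].filter
            (fun p => decide (t - W < p.2 ∧ p.2 ≤ t)) = [(a, s)] := by
          simp [List.filter_cons, hin]
        rw [hfil]
        simp only [List.map_cons, List.map_nil, List.sum_cons, List.sum_nil, add_zero]
        have hmono : ((S.filter (fun p => decide (t - W < p.2 ∧ p.2 ≤ t))).map Prod.fst).sum
            ≤ ((S.filter (fun p => decide (s - W < p.2 ∧ p.2 ≤ s))).map Prod.fst).sum := by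
          apply filter_sum_mono _ _ _ _ hnn
          intro x hx hpx
          simp only [decide_eq_true_eq] at hpx ⊢
          have hxs := hlt x hx
          constructor
          · linarith [hin.2]
          · linarith
        have : windowedSum S s W + a ≤ L := hcheck
        unfold windowedSum at this
        linarith
      · have hfil : [((a, s) : ℝ × ℝ)].filter
            (fun p => decide (t - W < p.2 ∧ p.2 ≤ t)) = [] := by
          simp [List.filter_cons, hin]
        rw [hfil]
        simp only [List.map_nil, List.sum_nil, add_zero]
        have := ih t
        unfold windowedSum at this
        exact this
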